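/- Let G = (V, E) be a finite connected undirected graph with root r, and suppose σ : V \ {r} → V (with σ(v) adjacent to v) induces a digraph with exactly one directed cycle C. Fix u on C with σ(u) = u', fix any edge (v₀, v₁) between the tree component containing r and the unicyclic component, and let v₁, v₂, …, v_ℓ = u be the path from v₁ to u following σ. Define σ_fix by σ_fix(v_i) = v_{i-1} for 1 ≤ i ≤ ℓ and σ_fix(v) = σ(v) otherwise. Then σ_fix induces a digraph with no directed cycle (i.e., a spanning tree oriented toward r). -/

import Mathlib

/-- `C` is the vertex set of a directed cycle of the functional digraph of `σ`. -/
def IsFunCycleSet {V : Type*} (σ : V → V) (C : Set V) : Prop :=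
  C.Nonempty ∧ (∀ x ∈ C, σ x ∈ C) ∧ (∀ x ∈ C, ∀ y ∈ C, ∃ n : ℕ, σ^[n] x = y) ∧
    ∀ x ∈ C, ∃ n : ℕ, 0 < n ∧ σ^[n] x = x

/-- The data of the cycle-popping repair construction: `σ` is an out-neighbour
assignment on the connected rooted graph `(G, r)` whose functional digraph has a
unique directed cycle `C`; `u ∈ C`; `(v₀, v₁)` is an edge of `G` with `v₀` in the
tree component of `r` and `v₁` in the unicyclic component; `vs = [v₁, …, v_ℓ = u]`
is the σ-path from `v₁` to `u`; and `σfix` reverses this path (`σfix vᵢ = vᵢ₋₁`,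
with `σfix v₁ = v₀`) and agrees with `σ` elsewhere. -/
def CPRepair {V : Type*} (G : SimpleGraph V) (r : V) (σ : V → V) (C : Set V)
    (u v₀ : V) (σfix : V → V) (vs : List V) : Prop :=
  (∀ v, v ≠ r → G.Adj v (σ v)) ∧
  IsFunCycleSet σ C ∧ r ∉ C ∧
  (∀ C' : Set V, IsFunCycleSet σ C' → r ∉ C' → C' = C) ∧
  u ∈ C ∧
  vs ≠ [] ∧ vs.Nodup ∧ vs.getLast? = some u ∧ r ∉ vs ∧
  List.Chain' (fun a b => σ a = b) vs ∧
  Relation.ReflTransGen (fun a b => a ≠ r ∧ σ a = b) v₀ r ∧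
  (∀ v₁ ∈ vs.head?, ¬ Relation.ReflTransGen (fun a b => a ≠ r ∧ σ a = b) v₁ r ∧
    G.Adj v₀ v₁ ∧ σfix v₁ = v₀) ∧
  List.Chain' (fun a b => σfix b = a) vs ∧
  (∀ x, x ∉ vs → σfix x = σ x)

/-- Cycle-popping repair: the repaired assignment `σfix` induces a digraph with no
directed cycle, i.e. a spanning tree oriented toward `r`. -/
theorem cp_repair_acyclic {V : Type*} [Fintype V]
    (G : SimpleGraph V) (hG : G.Connected) (r : V)
    (σ : V → V) (C : Set V) (u v₀ : V) (σfix : V → V) (vs : List V)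
    (h : CPRepair G r σ C u v₀ σfix vs) :
    ∀ v : V, ¬ Relation.TransGen (fun a b => a ≠ r ∧ σfix a = b) v v := by
  classical
  obtain ⟨hadj, hC, hrC, huniq, huC, hne, hnd, hlast, hrvs, hchain, hv0, hv1, hchain2, hout⟩ := h
  intro v hcyc
  -- Step extraction for TransGen
  have iter_of_trans : ∀ a b : V, Relation.TransGen (fun a b => a ≠ r ∧ σfix a = b) a b →
      ∃ n, 0 < n ∧ σfix^[n] a = b ∧ ∀ k < n, σfix^[k] a ≠ r := by
    intro a b hab
    induction hab with
    | single h1 =>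
      exact ⟨1, one_pos, h1.2, by intro k hk; interval_cases k; exact h1.1⟩
    | tail h1 h2 ih =>
      obtain ⟨n, hn, he, hner⟩ := ih
      refine ⟨n + 1, Nat.succ_pos _, ?_, ?_⟩
      · rw [Function.iterate_succ_apply', he]; exact h2.2
      · intro k hk
        rcases Nat.lt_succ_iff_lt_or_eq.mp hk with hlt | heq
        · exact hner k hlt
        · subst heq; rw [he]; exact h2.1
  obtain ⟨p, hp, hpv, hpner⟩ := iter_of_trans v v hcyc
  have hmul : ∀ q, σfix^[p * q] v = v := by
    intro q
    induction q with
    | zero => simp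
    | succ q ih => rw [Nat.mul_succ, Function.iterate_add_apply, hpv, ih]
  have hner_all : ∀ k, σfix^[k] v ≠ r := by
    intro k
    have hkey : σfix^[k] v = σfix^[k % p] v := by
      conv_lhs => rw [← Nat.mod_add_div k p]
      rw [Function.iterate_add_apply, hmul (k / p)]
    rw [hkey]
    exact hpner _ (Nat.mod_lt _ hp)
  -- one sigma-step stays in vs ∪ C
  have key_step : ∀ l : List V, l.Chain' (fun a b => σ a = b) → l.getLast? = some u →
      ∀ w ∈ l, σ w ∈ l ∨ w = u := by
    intro l
    induction l with
    | nil => simp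
    | cons a l ih =>
      cases l with
      | nil =>
        intro _ hl w hw
        simp only [List.getLast?_singleton, Option.some.injEq] at hl
        simp only [List.mem_singleton] at hw
        right; rw [hw, hl]
      | cons b l' =>
        intro hc hl w hw
        simp only [List.Chain', List.isChain_cons_cons] at hc
        rcases List.mem_cons.mp hw with rfl | hw'
        · left; rw [hc.1]; simp
        · rcases ih hc.2 (by simpa using hl) w hw' with hmem | heq
          · left; exact List.mem_cons_of_mem _ hmem
          · right; exact heq
  have step_vs : ∀ w ∈ vs, σ w ∈ vs ∨ σ w ∈ C := by
    intro w hw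
    rcases key_step vs hchain hlast w hw with hmem | rfl
    · left; exact hmem
    · right; exact hC.2.1 _ huC
  have closure : ∀ w, (w ∈ vs ∨ w ∈ C) → ∀ k, σ^[k] w ∈ vs ∨ σ^[k] w ∈ C := by
    intro w hw k
    induction k with
    | zero => simpa using hw
    | succ k ih =>
      rw [Function.iterate_succ_apply']
      rcases ih with hmem | hmem
      · exact step_vs _ hmem
      · right; exact hC.2.1 _ hmem
  have iter_of_rt : ∀ a b : V, Relation.ReflTransGen (fun a b => a ≠ r ∧ σ a = b) a b →
      ∃ m, σ^[m] a = b := by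
    intro a b hab
    induction hab with
    | refl => exact ⟨0, rfl⟩
    | tail h1 h2 ih =>
      obtain ⟨m, hm⟩ := ih
      exact ⟨m + 1, by rw [Function.iterate_succ_apply', hm, h2.2]⟩
  obtain ⟨m, hm⟩ := iter_of_rt v₀ r hv0
  have hfix_v0 : σfix^[m] v₀ = r := by
    have key : ∀ j, j ≤ m → σfix^[j] v₀ = σ^[j] v₀ := by
      intro j
      induction j with
      | zero => intro _; rfl
      | succ j ih =>
        intro hj
        have hj' : j ≤ m := Nat.le_of_succ_le hj
        have hnotvs : σ^[j] v₀ ∉ vs := by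
          intro hmem
          have hcl := closure _ (Or.inl hmem) (m - j)
          rw [← Function.iterate_add_apply, Nat.sub_add_cancel hj', hm] at hcl
          rcases hcl with hx | hx
          · exact hrvs hx
          · exact hrC hx
        rw [Function.iterate_succ_apply', Function.iterate_succ_apply', ih hj',
          hout _ hnotvs]
    rw [key m le_rfl, hm]
  have reach_head : ∀ l : List V, l.Chain' (fun a b => σfix b = a) → ∀ a, l.head? = some a →
      ∀ w ∈ l, ∃ k, σfix^[k] w = a := by
    intro l
    induction l with
    | nil => simp
    | cons x l ih =>
      intro hc a ha w hw
      simp only [List.head?_cons, Option.some.injEq] at ha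
      rcases List.mem_cons.mp hw with rfl | hw'
      · exact ⟨0, ha⟩
      · cases l with
        | nil => simp at hw'
        | cons y l' =>
          simp only [List.Chain', List.isChain_cons_cons] at hc
          obtain ⟨k, hk⟩ := ih hc.2 y rfl w hw'
          exact ⟨k + 1, by rw [Function.iterate_succ_apply', hk, hc.1, ha]⟩
  by_cases hcase : ∃ w ∈ vs, ∃ k, σfix^[k] v = w
  · -- the σfix-orbit of v meets vs, hence reaches r: contradiction
    obtain ⟨w, hwvs, k, hk⟩ := hcase
    have hhead : vs.head? = some (vs.head hne) := List.head?_eq_head hne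
    obtain ⟨-, -, hfx⟩ := hv1 (vs.head hne) (Option.mem_def.mpr hhead)
    obtain ⟨k1, hk1⟩ := reach_head vs hchain2 _ hhead w hwvs
    have h2 : σfix^[k1 + k] v = vs.head hne := by
      rw [Function.iterate_add_apply, hk, hk1]
    have h3 : σfix^[1 + (k1 + k)] v = v₀ := by
      rw [Function.iterate_add_apply, h2]
      simpa using hfx
    have h4 : σfix^[m + (1 + (k1 + k))] v = r := by
      rw [Function.iterate_add_apply, h3, hfix_v0]
    exact hner_all _ h4
  · -- the σfix-orbit of v avoids vs, hence is a σ-cycle distinct from C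
    push_neg at hcase
    have hnv : ∀ k, σfix^[k] v ∉ vs := fun k hkmem => hcase _ hkmem k rfl
    have key : ∀ n j, σ^[n] (σfix^[j] v) = σfix^[n + j] v := by
      intro n
      induction n with
      | zero => intro j; simp
      | succ n ih =>
        intro j
        rw [Function.iterate_succ_apply', ih j, ← hout _ (hnv (n + j)),
          show n + 1 + j = (n + j) + 1 from by omega, Function.iterate_succ_apply']
    have hC' : IsFunCycleSet σ {x | ∃ j, σfix^[j] v = x} := by
      refine ⟨⟨v, 0, rfl⟩, ?_, ?_, ?_⟩
      · rintro x ⟨j, rfl⟩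
        exact ⟨j + 1, by rw [Function.iterate_succ_apply', hout _ (hnv j)]⟩
      · rintro x ⟨a, rfl⟩ y ⟨b, rfl⟩
        refine ⟨b + p * (a + 1) - a, ?_⟩
        have h1 : a + 1 ≤ p * (a + 1) := Nat.le_mul_of_pos_left _ hp
        have h2 : b + p * (a + 1) - a + a = b + p * (a + 1) := by omega
        rw [key, h2, Function.iterate_add_apply, hmul (a + 1)]
      · rintro x ⟨a, rfl⟩
        exact ⟨p, hp, by rw [key, Nat.add_comm, Function.iterate_add_apply, hpv]⟩
    have hrC' : r ∉ {x | ∃ j, σfix^[j] v = x} := by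
      rintro ⟨j, hj⟩; exact hner_all j hj
    have heq := huniq _ hC' hrC'
    have huvs : u ∈ vs := by
      have h1 := List.getLast_mem hne
      rw [List.getLast?_eq_getLast hne, Option.some.injEq] at hlast
      rw [← hlast]; exact h1
    have huC' : u ∈ {x | ∃ j, σfix^[j] v = x} := by rw [heq]; exact huC
    obtain ⟨j, hj⟩ := huC'
    rw [← hj] at huvs
    exact hnv j huvs
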